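/- Let f : ℝⁿ → (−∞,∞] be proper, lower semicontinuous, and primal lower nice at a point x̄ ∈ ℝⁿ. Then there exists another function h : ℝⁿ → (−∞,∞] that is proper, lower semicontinuous, bounded below, primal lower nice at every point of its domain, and agrees identically with f on some neighborhood of x̄. -/

import Mathlib

open Filter Topology
open scoped ENNReal NNReal

/-- The slope `|∇f|(x)`: the infimum of all `δ > 0` such that `x` is a local minimizer of
`f + δ·d(·,x)`; it equals `∞` at points where `f x = ⊤`. -/
noncomputable def slopeM {X : Type*} [MetricSpace X] (f : X → EReal) (x : X) : ℝ≥0∞ :=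
  if f x = ⊤ then ⊤
  else sInf {δ : ℝ≥0∞ | ∃ c : ℝ, 0 < c ∧ δ = ENNReal.ofReal c ∧
    ∀ᶠ z in 𝓝 x, f x ≤ f z + ((c * dist z x : ℝ) : EReal)}

/-- The modulus of identifiability: `liminf_{x → xbar, x ∉ M, f(x) → f(xbar)} |∇f|(x)`. -/
noncomputable def identModulus {X : Type*} [MetricSpace X] (f : X → EReal) (M : Set X)
    (xbar : X) : ℝ≥0∞ :=
  Filter.liminf (slopeM f) (𝓝[Mᶜ] xbar ⊓ Filter.comap f (𝓝 (f xbar)))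

/-- `M` is an identifiable set for `f` at `xbar`: it is closed, contains `xbar`, and the
modulus of identifiability is strictly positive. -/
def Identifiable {X : Type*} [MetricSpace X] (f : X → EReal) (M : Set X) (xbar : X) : Prop :=
  IsClosed M ∧ xbar ∈ M ∧ 0 < identModulus f M xbar

/-- `y` is a regular (Fréchet) subgradient of `f` at `x`:
`liminf_{z → x} (f(z) − f(x) − ⟨y, z − x⟩)/‖z − x‖ ≥ 0`. -/
def RegularSubgradient {n : ℕ} (f : EuclideanSpace ℝ (Fin n) → EReal)
    (x y : EuclideanSpace ℝ (Fin n)) : Prop :=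
  f x ≠ ⊤ ∧ ∀ ε : ℝ, 0 < ε →
    ∀ᶠ z in 𝓝 x, f x + (((inner ℝ y (z - x) : ℝ) - ε * ‖z - x‖ : ℝ) : EReal) ≤ f z

/-- The limiting subdifferential `∂f(x)`: all limits of regular subgradients `y_r` at points
`x_r → x` with `f(x_r) → f(x)`. -/
def LimitingSubdiff {n : ℕ} (f : EuclideanSpace ℝ (Fin n) → EReal)
    (x : EuclideanSpace ℝ (Fin n)) : Set (EuclideanSpace ℝ (Fin n)) :=
  {y | f x ≠ ⊤ ∧ ∃ xr yr : ℕ → EuclideanSpace ℝ (Fin n),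
    (∀ r, RegularSubgradient f (xr r) (yr r)) ∧
    Tendsto xr atTop (𝓝 x) ∧ Tendsto (fun r => f (xr r)) atTop (𝓝 (f x)) ∧
    Tendsto yr atTop (𝓝 y)}

/-- `f` is primal lower nice at `xbar`. -/
def PrimalLowerNice {n : ℕ} (f : EuclideanSpace ℝ (Fin n) → EReal)
    (xbar : EuclideanSpace ℝ (Fin n)) : Prop :=
  ∃ (α β : ℝ) (U : Set (EuclideanSpace ℝ (Fin n))), U ∈ 𝓝 xbar ∧
    ∀ x ∈ U, ∀ x' ∈ U, ∀ y ∈ LimitingSubdiff f x,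
      f x + (((inner ℝ y (x' - x) : ℝ) - (α + β * ‖y‖) * ‖x' - x‖ ^ 2 : ℝ) : EReal) ≤ f x'

noncomputable section
variable {n : ℕ}

local notation "E" => EuclideanSpace ℝ (Fin n)

open Classical in
/-- The penalty function: `γ` on `O`, `⊤` outside. -/
def Gaux (O : Set (EuclideanSpace ℝ (Fin n))) (γ : EuclideanSpace ℝ (Fin n) → ℝ)
    (z : EuclideanSpace ℝ (Fin n)) : EReal :=
  if z ∈ O then ((γ z : ℝ) : EReal) else ⊤

lemma Gaux_ne_bot (O : Set E) (γ : E → ℝ) (z : E) : Gaux O γ z ≠ ⊥ := by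
  unfold Gaux; split <;> simp

lemma Gaux_nonneg {O : Set E} {γ : E → ℝ} (hγ : ∀ w ∈ O, 0 ≤ γ w) (z : E) :
    (0 : EReal) ≤ Gaux O γ z := by
  unfold Gaux; split
  · exact_mod_cast EReal.coe_nonneg.2 (hγ _ ‹_›)
  · exact le_top

/-- lsc of `Gaux` given continuity on `O` and escape to `∞` at the boundary. -/
lemma Gaux_lsc {O : Set E} {γ : E → ℝ} (hO : IsOpen O) (hγc : ContinuousOn γ O)
    (hesc : ∀ z ∉ O, ∀ c : ℝ, ∀ᶠ w in 𝓝 z, w ∈ O → c ≤ γ w) :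
    LowerSemicontinuous (Gaux O γ) := by
  intro x c hc
  by_cases hx : x ∈ O
  · rw [show Gaux O γ x = ((γ x : ℝ) : EReal) from if_pos hx] at hc
    induction c with
    | bot =>
      filter_upwards with w
      exact bot_lt_iff_ne_bot.2 (Gaux_ne_bot O γ w)
    | coe c =>
      have hc' : c < γ x := EReal.coe_lt_coe_iff.1 hc
      have h1 : ∀ᶠ w in 𝓝 x, w ∈ O := hO.mem_nhds hx
      have h2 : ∀ᶠ w in 𝓝 x, c < γ w :=
        (hγc.continuousAt (hO.mem_nhds hx)) (isOpen_Ioi.mem_nhds hc')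
      filter_upwards [h1, h2] with w hw1 hw2
      rw [show Gaux O γ w = ((γ w : ℝ) : EReal) from if_pos hw1]
      exact_mod_cast hw2
    | top => exact absurd hc not_top_lt
  · rw [show Gaux O γ x = ⊤ from if_neg hx] at hc
    induction c with
    | bot =>
      filter_upwards with w
      exact bot_lt_iff_ne_bot.2 (Gaux_ne_bot O γ w)
    | coe c =>
      filter_upwards [hesc x hx (c + 1)] with w hw
      unfold Gaux
      split
      · next h =>
        refine lt_of_lt_of_le ?_ (show (((c + 1 : ℝ)) : EReal) ≤ _ from by exact_mod_cast hw h)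
        exact_mod_cast lt_add_one c
      · exact EReal.coe_lt_top c
    | top => exact absurd hc (lt_irrefl ⊤)

/-- Sum of an lsc function (never `⊥`) with `Gaux` is lsc. -/
lemma lsc_add_Gaux {F : E → EReal} {O : Set E} {γ : E → ℝ}
    (hF : LowerSemicontinuous F) (hFbot : ∀ z, F z ≠ ⊥)
    (hG : LowerSemicontinuous (Gaux O γ)) :
    LowerSemicontinuous (fun z => F z + Gaux O γ z) := by
  refine hF.add' hG fun z => EReal.continuousAt_add (.inr (Gaux_ne_bot O γ z)) (.inl (hFbot z))

/-- lsc functions avoiding `⊥` are bounded below on compact sets. -/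
lemma lsc_bddBelow_compact {F : E → EReal} (hF : LowerSemicontinuous F)
    (hFbot : ∀ z, F z ≠ ⊥) {K : Set E} (hK : IsCompact K) :
    ∃ c : ℝ, ∀ z ∈ K, (c : EReal) ≤ F z := by
  have hch : ∀ x : EuclideanSpace ℝ (Fin n), ∃ c : ℝ, (c : EReal) < F x := by
    intro x
    rcases EReal.exists_between_coe_real (bot_lt_iff_ne_bot.2 (hFbot x)) with ⟨c, _, hc2⟩
    exact ⟨c, hc2⟩
  choose c hc using hch
  obtain ⟨t, htK, hcov⟩ := hK.elim_nhds_subcover (fun x => {w | (c x : EReal) < F w})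
    (fun x _ => hF x _ (hc x))
  rcases t.eq_empty_or_nonempty with rfl | ht
  · exact ⟨0, fun z hz => absurd (hcov hz) (by simp)⟩
  · obtain ⟨x0, hx0, hmin⟩ := t.exists_min_image c ht
    refine ⟨c x0, fun z hz => ?_⟩
    obtain ⟨x, hxt, hxz⟩ := Set.mem_iUnion₂.1 (hcov hz)
    exact le_trans (EReal.coe_le_coe_iff.2 (hmin x hxt)) (le_of_lt hxz)

/-- Shifting a regular subgradient of `F + Gaux` by the (approximate) gradient of `γ`. -/
lemma regSubgrad_shift {F : E → EReal} {O : Set E} {γ : E → ℝ}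
    (hFbot : ∀ z, F z ≠ ⊥) {x v : E} {K : ℝ} (hK : 0 ≤ K)
    (hW : ∀ᶠ z in 𝓝 x, z ∈ O ∧ |γ z - γ x - (inner ℝ v (z - x) : ℝ)| ≤ K * ‖z - x‖ ^ 2)
    (hx : x ∈ O) {y : E}
    (hy : RegularSubgradient (fun z => F z + Gaux O γ z) x y) :
    RegularSubgradient F x (y - v) := by
  have hGx : Gaux O γ x = ((γ x : ℝ) : EReal) := if_pos hx
  have hFxt : F x ≠ ⊤ := by
    intro h
    apply hy.1
    simp only [h, hGx]
    exact EReal.top_add_coe _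
  refine ⟨hFxt, fun ε hε => ?_⟩
  have hδ : (0:ℝ) < ε / (2 * (K + 1)) := by positivity
  have hball : ∀ᶠ z in 𝓝 x, dist z x ≤ ε / (2 * (K + 1)) :=
    Filter.eventually_of_mem (Metric.closedBall_mem_nhds x hδ) (fun z hz => hz)
  filter_upwards [hy.2 (ε / 2) (by positivity), hW, hball] with z h1 h2 h3
  by_cases hFz : F z = ⊤
  · rw [hFz]; exact le_top
  have hzO : z ∈ O := h2.1
  have hGz : Gaux O γ z = ((γ z : ℝ) : EReal) := if_pos hzO
  -- convert everything to reals
  set a := (F x).toReal with ha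
  set b := (F z).toReal with hb
  have hFx' : F x = ((a : ℝ) : EReal) := (EReal.coe_toReal hFxt (hFbot x)).symm
  have hFz' : F z = ((b : ℝ) : EReal) := (EReal.coe_toReal hFz (hFbot z)).symm
  rw [hFx', hGx, hFz', hGz, ← EReal.coe_add, ← EReal.coe_add, ← EReal.coe_add] at h1
  rw [hFx', hFz', ← EReal.coe_add]
  rw [EReal.coe_le_coe_iff] at h1 ⊢
  have hiy : (inner ℝ (y - v) (z - x) : ℝ) = (inner ℝ y (z - x) : ℝ) - (inner ℝ v (z - x) : ℝ) :=
    inner_sub_left _ _ _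
  have habs := h2.2
  have hs : ‖z - x‖ ≤ ε / (2 * (K + 1)) := by
    rw [← dist_eq_norm]; exact h3
  have hsn : (0:ℝ) ≤ ‖z - x‖ := norm_nonneg _
  have hKs : K * ‖z - x‖ ^ 2 ≤ (ε / 2) * ‖z - x‖ := by
    have h4 : K * ‖z - x‖ ≤ ε / 2 := by
      calc K * ‖z - x‖ ≤ K * (ε / (2 * (K + 1))) := by
            exact mul_le_mul_of_nonneg_left hs hK
        _ ≤ ε / 2 := by
            rw [mul_comm, div_mul_eq_mul_div, div_le_div_iff₀ (by positivity) (by norm_num : (0:ℝ) < 2)]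
            nlinarith
    nlinarith [sq_nonneg (‖z - x‖)]
  rw [hiy]
  rw [abs_le] at habs
  nlinarith [habs.1, habs.2, h1]

lemma limSubdiff_shift {F : E → EReal} {O : Set E} {γ : E → ℝ}
    (hFbot : ∀ z, F z ≠ ⊥) {B : Set E} (hB : IsOpen B) (hBO : B ⊆ O)
    {v : E → E} {K : ℝ} (hK : 0 ≤ K)
    (hquad : ∀ x ∈ B, ∀ z ∈ B, |γ z - γ x - (inner ℝ (v x) (z - x) : ℝ)| ≤ K * ‖z - x‖ ^ 2)
    (hvc : ContinuousOn v B) (hγc : ContinuousOn γ B)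
    {x y : E} (hx : x ∈ B)
    (hy : y ∈ LimitingSubdiff (fun z => F z + Gaux O γ z) x) :
    y - v x ∈ LimitingSubdiff F x := by
  obtain ⟨hxt, xr, yr, hreg, hxr, hfxr, hyr⟩ := hy
  have hxO : x ∈ O := hBO hx
  have hGx : Gaux O γ x = ((γ x : ℝ) : EReal) := if_pos hxO
  have hFxt : F x ≠ ⊤ := by
    intro h
    exact hxt (by simp only [h, hGx, EReal.top_add_coe])
  have hev : ∀ᶠ r in atTop, xr r ∈ B := hxr.eventually_mem (hB.mem_nhds hx)
  obtain ⟨N, hN⟩ := eventually_atTop.1 hev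
  have shiftT : Tendsto (fun r : ℕ => r + N) atTop atTop := tendsto_add_atTop_nat N
  have hxrT : Tendsto (fun r => xr (r + N)) atTop (𝓝 x) := hxr.comp shiftT
  refine ⟨hFxt, fun r => xr (r + N), fun r => yr (r + N) - v (xr (r + N)), ?_, hxrT, ?_, ?_⟩
  · intro r
    have hmem : xr (r + N) ∈ B := hN _ (Nat.le_add_left N r)
    refine regSubgrad_shift hFbot hK ?_ (hBO hmem) (hreg (r + N))
    filter_upwards [hB.mem_nhds hmem] with z hz
    exact ⟨hBO hz, hquad _ hmem _ hz⟩
  · -- convergence of F-values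
    have hGc : Tendsto (fun r => γ (xr (r + N))) atTop (𝓝 (γ x)) :=
      ((hγc.continuousAt (hB.mem_nhds hx))).tendsto.comp hxrT
    have hhr : Tendsto (fun r => F (xr (r + N)) + Gaux O γ (xr (r + N))) atTop
        (𝓝 (F x + Gaux O γ x)) := hfxr.comp shiftT
    have hhx_t : F x + Gaux O γ x ≠ ⊤ := hxt
    have hhx_b : F x + Gaux O γ x ≠ ⊥ := by
      rw [Ne, EReal.add_eq_bot_iff]
      rintro (h | h)
      · exact hFbot x h
      · exact Gaux_ne_bot O γ x h
    have htoR : Tendsto (fun r => (F (xr (r + N)) + Gaux O γ (xr (r + N))).toReal) atTop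
        (𝓝 ((F x + Gaux O γ x).toReal)) := (EReal.tendsto_toReal hhx_t hhx_b).comp hhr
    have hFr_t : ∀ r, F (xr (r + N)) ≠ ⊤ := by
      intro r h
      have hmem : xr (r + N) ∈ B := hN _ (Nat.le_add_left N r)
      have := (hreg (r + N)).1
      exact this (by simp only [h, if_pos (hBO hmem), Gaux, EReal.top_add_coe])
    have key : ∀ r, F (xr (r + N)) =
        (((F (xr (r + N)) + Gaux O γ (xr (r + N))).toReal - γ (xr (r + N)) : ℝ) : EReal) := by
      intro r
      have hmem : xr (r + N) ∈ B := hN _ (Nat.le_add_left N r)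
      have hG : Gaux O γ (xr (r + N)) = ((γ (xr (r + N)) : ℝ) : EReal) := if_pos (hBO hmem)
      rw [hG, EReal.toReal_add (hFr_t r) (hFbot _) (EReal.coe_ne_top _) (EReal.coe_ne_bot _),
        EReal.toReal_coe, add_sub_cancel_right, EReal.coe_toReal (hFr_t r) (hFbot _)]
    have keyx : ((F x + Gaux O γ x).toReal - γ x : ℝ) = (F x).toReal := by
      rw [hGx, EReal.toReal_add hFxt (hFbot x) (EReal.coe_ne_top _) (EReal.coe_ne_bot _),
        EReal.toReal_coe, add_sub_cancel_right]
    have hconv : Tendsto (fun r =>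
        (((F (xr (r + N)) + Gaux O γ (xr (r + N))).toReal - γ (xr (r + N)) : ℝ) : EReal)) atTop
        (𝓝 (F x)) := by
      rw [show F x = (((F x).toReal : ℝ) : EReal) from (EReal.coe_toReal hFxt (hFbot x)).symm,
        ← keyx]
      exact EReal.tendsto_coe.2 (htoR.sub hGc)
    exact hconv.congr (fun r => (key r).symm)
  · exact (hyr.comp shiftT).sub
      (((hvc.continuousAt (hB.mem_nhds hx))).tendsto.comp hxrT)

lemma pln_transfer {F : E → EReal} {O U : Set E} {γ : E → ℝ} {α β : ℝ}
    (hFbot : ∀ z, F z ≠ ⊥) (hO : IsOpen O) (hγ : ContDiffOn ℝ 2 γ O)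
    (hU : IsOpen U) (hβ : 0 ≤ β)
    (hpln : ∀ x ∈ U, ∀ x' ∈ U, ∀ y ∈ LimitingSubdiff F x,
      F x + (((inner ℝ y (x' - x) : ℝ) - (α + β * ‖y‖) * ‖x' - x‖ ^ 2 : ℝ) : EReal) ≤ F x')
    {z : E} (hz : z ∈ O) (hzU : z ∈ U) :
    PrimalLowerNice (fun w => F w + Gaux O γ w) z := by
  classical
  have hd2 : ContDiffAt ℝ 2 γ z := hγ.contDiffAt (hO.mem_nhds hz)
  have hd1 : ContDiffAt ℝ 1 (fderiv ℝ γ) z := hd2.fderiv_right (by norm_num)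
  obtain ⟨K, t, ht, hlip⟩ := hd1.exists_lipschitzOnWith
  obtain ⟨ρ, hρ, hρsub⟩ := (Metric.nhds_basis_closedBall.mem_iff).1
    (Filter.inter_mem (Filter.inter_mem ht (hO.mem_nhds hz)) (hU.mem_nhds hzU))
  set B := Metric.ball z ρ with hBdef
  have hBcB : B ⊆ Metric.closedBall z ρ := Metric.ball_subset_closedBall
  have hcBt : Metric.closedBall z ρ ⊆ t := fun w hw => ((hρsub hw).1).1
  have hcBO : Metric.closedBall z ρ ⊆ O := fun w hw => ((hρsub hw).1).2
  have hcBU : Metric.closedBall z ρ ⊆ U := fun w hw => (hρsub hw).2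
  have hBO : B ⊆ O := fun w hw => hcBO (hBcB hw)
  have hBU : B ⊆ U := fun w hw => hcBU (hBcB hw)
  have hdiff : ∀ u ∈ O, DifferentiableAt ℝ γ u := fun u hu =>
    (hγ.contDiffAt (hO.mem_nhds hu)).differentiableAt (by norm_num)
  set v : E → E := fun w => (InnerProductSpace.toDual ℝ _).symm (fderiv ℝ γ w) with hvdef
  have hv_inner : ∀ (w d : E), (inner ℝ (v w) d : ℝ) = fderiv ℝ γ w d := fun w d =>
    InnerProductSpace.toDual_symm_apply
  have hlip' : ∀ u ∈ Metric.closedBall z ρ, ∀ w ∈ Metric.closedBall z ρ,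
      ‖fderiv ℝ γ u - fderiv ℝ γ w‖ ≤ (K : ℝ) * ‖u - w‖ := by
    intro u hu w hw
    have := hlip.dist_le_mul u (hcBt hu) w (hcBt hw)
    rwa [dist_eq_norm, dist_eq_norm] at this
  have hquad : ∀ x ∈ B, ∀ w ∈ B,
      |γ w - γ x - (inner ℝ (v x) (w - x) : ℝ)| ≤ (K : ℝ) * ‖w - x‖ ^ 2 := by
    intro x hx w hw
    have hseg : segment ℝ x w ⊆ B := (convex_ball z ρ).segment_subset hx hw
    set φ : E → ℝ := fun u => γ u - fderiv ℝ γ x u with hφdef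
    have hφd : ∀ u ∈ segment ℝ x w,
        HasFDerivWithinAt φ (fderiv ℝ γ u - fderiv ℝ γ x) (segment ℝ x w) u := by
      intro u hu
      exact (((hdiff u (hBO (hseg hu))).hasFDerivAt).sub
        ((fderiv ℝ γ x).hasFDerivAt)).hasFDerivWithinAt
    have hbound : ∀ u ∈ segment ℝ x w,
        ‖fderiv ℝ γ u - fderiv ℝ γ x‖ ≤ (K : ℝ) * ‖w - x‖ := by
      intro u hu
      have h1 := hlip' u (hBcB (hseg hu)) x (hBcB hx)
      refine h1.trans (mul_le_mul_of_nonneg_left ?_ (by positivity))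
      rw [segment_eq_image'] at hu
      obtain ⟨θ, hθ, rfl⟩ := hu
      rw [add_sub_cancel_left, norm_smul, Real.norm_eq_abs, abs_of_nonneg hθ.1]
      nlinarith [norm_nonneg (w - x), hθ.2]
    have key := (convex_segment x w).norm_image_sub_le_of_norm_hasFDerivWithin_le
      hφd hbound (left_mem_segment ℝ x w) (right_mem_segment ℝ x w)
    have hφcalc : φ w - φ x = γ w - γ x - (inner ℝ (v x) (w - x) : ℝ) := by
      simp only [hφdef, hv_inner, map_sub]
      ring
    rw [hφcalc] at key
    rw [← Real.norm_eq_abs]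
    calc ‖γ w - γ x - (inner ℝ (v x) (w - x) : ℝ)‖ ≤ (K : ℝ) * ‖w - x‖ * ‖w - x‖ := key
      _ = (K : ℝ) * ‖w - x‖ ^ 2 := by ring
  set G0 : ℝ := ‖fderiv ℝ γ z‖ + (K : ℝ) * ρ with hG0def
  have hvbound : ∀ x ∈ B, ‖v x‖ ≤ G0 := by
    intro x hx
    have hnv : ‖v x‖ = ‖fderiv ℝ γ x‖ := LinearIsometryEquiv.norm_map _ _
    rw [hnv, hG0def]
    have h1 := hlip' x (hBcB hx) z (Metric.mem_closedBall_self hρ.le)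
    have h2 : ‖x - z‖ ≤ ρ := by
      rw [← dist_eq_norm]; exact (Metric.mem_ball.1 hx).le
    calc ‖fderiv ℝ γ x‖ ≤ ‖fderiv ℝ γ z‖ + ‖fderiv ℝ γ x - fderiv ℝ γ z‖ := by
          have h0 : fderiv ℝ γ z + (fderiv ℝ γ x - fderiv ℝ γ z) = fderiv ℝ γ x := by abel
          have h3 := norm_add_le (fderiv ℝ γ z) (fderiv ℝ γ x - fderiv ℝ γ z)
          rw [h0] at h3; exact h3
      _ ≤ ‖fderiv ℝ γ z‖ + (K : ℝ) * ρ := by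
          have := h1.trans (mul_le_mul_of_nonneg_left h2 (K.coe_nonneg))
          linarith
  have hvc : ContinuousOn v B := by
    have h1 : ContinuousOn (fderiv ℝ γ) B :=
      (hlip.continuousOn).mono (fun w hw => hcBt (hBcB hw))
    exact ((InnerProductSpace.toDual ℝ _).symm.continuous.comp_continuousOn h1)
  have hγc : ContinuousOn γ B := (hγ.continuousOn).mono hBO
  refine ⟨α + β * G0 + K, β, B, Metric.ball_mem_nhds z hρ, ?_⟩
  intro x hxB x' hx'B y hy
  have hy0 : y - v x ∈ LimitingSubdiff F x :=
    limSubdiff_shift hFbot Metric.isOpen_ball hBO K.coe_nonneg hquad hvc hγc hxB hy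
  simp only []
  by_cases hTx' : F x' + Gaux O γ x' = ⊤
  · rw [hTx']; exact le_top
  have hx'O : x' ∈ O := hBO hx'B
  have hxO : x ∈ O := hBO hxB
  have hGx : Gaux O γ x = ((γ x : ℝ) : EReal) := if_pos hxO
  have hGx' : Gaux O γ x' = ((γ x' : ℝ) : EReal) := if_pos hx'O
  have hFx't : F x' ≠ ⊤ := by
    intro h; exact hTx' (by rw [h, hGx', EReal.top_add_coe])
  have hFxt : F x ≠ ⊤ := by
    intro h; exact hy.1 (by simp only [h, hGx, EReal.top_add_coe])
  have hPLN := hpln x (hBU hxB) x' (hBU hx'B) (y - v x) hy0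
  set a := (F x).toReal with hadef
  set b := (F x').toReal with hbdef
  have hFx : F x = ((a : ℝ) : EReal) := (EReal.coe_toReal hFxt (hFbot x)).symm
  have hFx' : F x' = ((b : ℝ) : EReal) := (EReal.coe_toReal hFx't (hFbot x')).symm
  rw [hFx, hFx', ← EReal.coe_add, EReal.coe_le_coe_iff] at hPLN
  rw [hFx, hFx', hGx, hGx', ← EReal.coe_add, ← EReal.coe_add, ← EReal.coe_add,
    EReal.coe_le_coe_iff]
  have hq := hquad x hxB x' hx'B
  rw [abs_le] at hq
  have hy0n : ‖y - v x‖ ≤ ‖y‖ + G0 :=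
    (norm_sub_le y (v x)).trans (by linarith [hvbound x hxB])
  have hy0n' : ‖y‖ - G0 ≤ ‖y - v x‖ := by
    have := norm_sub_norm_le y (v x)
    have h2 := hvbound x hxB
    linarith [abs_le.1 (abs_norm_sub_norm_le y (v x))]
  have hiy : (inner ℝ (y - v x) (x' - x) : ℝ) =
      (inner ℝ y (x' - x) : ℝ) - (inner ℝ (v x) (x' - x) : ℝ) := inner_sub_left _ _ _
  rw [hiy] at hPLN
  have hsq : (0:ℝ) ≤ ‖x' - x‖ ^ 2 := sq_nonneg _
  have hβy0 : β * ‖y - v x‖ ≤ β * ‖y‖ + β * G0 := by nlinarith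
  nlinarith [hq.1, hq.2, hPLN, mul_le_mul_of_nonneg_right hβy0 hsq]

lemma regSubgrad_zero {x y : E} (h : RegularSubgradient (fun _ => (0 : EReal)) x y) :
    y = 0 := by
  by_contra hy0
  have hn : 0 < ‖y‖ := norm_pos_iff.2 hy0
  have key : ∀ ε : ℝ, 0 < ε → ‖y‖ ≤ ε := by
    intro ε hε
    obtain ⟨δ, hδ, hball⟩ := Metric.eventually_nhds_iff.1 (h.2 ε hε)
    set t := δ / (2 * ‖y‖) with htdef
    have ht : 0 < t := by positivity
    have hdist : dist (x + t • y) x < δ := by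
      rw [dist_eq_norm, add_sub_cancel_left, norm_smul, Real.norm_eq_abs, abs_of_pos ht,
        htdef]
      rw [div_mul_eq_mul_div, mul_comm]
      rw [div_lt_iff₀ (by positivity)]
      nlinarith
    have hz := hball hdist
    simp only [add_sub_cancel_left] at hz
    have hinner : (inner ℝ y (t • y) : ℝ) = t * ‖y‖ ^ 2 := by
      rw [real_inner_smul_right, real_inner_self_eq_norm_sq]
    have hnorm : ‖t • y‖ = t * ‖y‖ := by
      rw [norm_smul, Real.norm_eq_abs, abs_of_pos ht]
    rw [hinner, hnorm] at hz
    have hz' : t * ‖y‖ ^ 2 - ε * (t * ‖y‖) ≤ 0 := by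
      rw [zero_add] at hz
      exact_mod_cast hz
    nlinarith [mul_pos ht hn]
  linarith [key (‖y‖ / 2) (by positivity)]

lemma zero_pln_ineq : ∀ x ∈ (Set.univ : Set (EuclideanSpace ℝ (Fin n))), ∀ x' ∈ Set.univ,
    ∀ y ∈ LimitingSubdiff (fun _ => (0 : EReal)) x,
    (fun _ => (0 : EReal)) x +
      (((inner ℝ y (x' - x) : ℝ) - ((0:ℝ) + 0 * ‖y‖) * ‖x' - x‖ ^ 2 : ℝ) : EReal) ≤
      (fun _ => (0 : EReal)) x' := by
  intro x _ x' _ y hy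
  obtain ⟨_, xr, yr, hreg, _, _, hyr⟩ := hy
  have hy0 : y = 0 := by
    have : ∀ r, yr r = 0 := fun r => regSubgrad_zero (hreg r)
    have h2 : Tendsto yr atTop (𝓝 0) := by
      rw [show yr = fun _ => (0 : EuclideanSpace ℝ (Fin n)) from funext this]
      exact tendsto_const_nhds
    exact tendsto_nhds_unique hyr h2
  subst hy0
  simp only [inner_zero_left, norm_zero, zero_add, mul_zero, zero_mul, zero_sub, neg_zero,
    mul_comm]
  norm_num

end

/-- Localization: a function that is primal lower nice at `xbar` agrees near `xbar` with a
proper closed function that is bounded below and primal lower nice at every point of its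
domain. -/
theorem primalLowerNice_localization {n : ℕ}
    (f : EuclideanSpace ℝ (Fin n) → EReal)
    (hproper : ∃ z, f z ≠ ⊤) (hlsc : LowerSemicontinuous f) (hbot : ∀ z, f z ≠ ⊥)
    (xbar : EuclideanSpace ℝ (Fin n)) (hpln : PrimalLowerNice f xbar) :
    ∃ h : EuclideanSpace ℝ (Fin n) → EReal,
      (∃ z, h z ≠ ⊤) ∧ LowerSemicontinuous h ∧ (∀ z, h z ≠ ⊥) ∧
      (∃ c : ℝ, ∀ z, (c : EReal) ≤ h z) ∧
      (∀ z, h z ≠ ⊤ → PrimalLowerNice h z) ∧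
      (∀ᶠ z in 𝓝 xbar, h z = f z) := by
  classical
  obtain ⟨α0, β0, U0, hU0, hplnI⟩ := hpln
  set α := |α0| with hαdef
  set β := |β0| with hβdef
  have hβ0 : 0 ≤ β := abs_nonneg _
  have hplnI' : ∀ x ∈ U0, ∀ x' ∈ U0, ∀ y ∈ LimitingSubdiff f x,
      f x + (((inner ℝ y (x' - x) : ℝ) - (α + β * ‖y‖) * ‖x' - x‖ ^ 2 : ℝ) : EReal) ≤ f x' := by
    intro x hx x' hx' y hy
    refine le_trans (add_le_add_right ?_ (f x)) (hplnI x hx x' hx' y hy)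
    apply EReal.coe_le_coe_iff.2
    have h1 : α0 + β0 * ‖y‖ ≤ α + β * ‖y‖ := by
      have h2 := le_abs_self α0
      have h3 := mul_le_mul_of_nonneg_right (le_abs_self β0) (norm_nonneg y)
      linarith
    nlinarith [sq_nonneg ‖x' - x‖]
  obtain ⟨ε, hε, hεsub⟩ := Metric.mem_nhds_iff.1 hU0
  set U := Metric.ball xbar ε with hUdef
  have hUopen : IsOpen U := Metric.isOpen_ball
  have hplnU : ∀ x ∈ U, ∀ x' ∈ U, ∀ y ∈ LimitingSubdiff f x,
      f x + (((inner ℝ y (x' - x) : ℝ) - (α + β * ‖y‖) * ‖x' - x‖ ^ 2 : ℝ) : EReal) ≤ f x' :=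
    fun x hx x' hx' y hy => hplnI' x (hεsub hx) x' (hεsub hx') y hy
  have hcont2 : Continuous fun w : EuclideanSpace ℝ (Fin n) => ‖w - xbar‖ ^ 2 :=
    ((continuous_id.sub continuous_const).norm).pow 2
  by_cases hdeg : ∃ δ, 0 < δ ∧ ∀ w ∈ Metric.ball xbar δ, f w = ⊤
  · -- degenerate case: f ≡ ⊤ near xbar
    obtain ⟨δ, hδ, hfdeg⟩ := hdeg
    set r := δ / 2 with hrdef
    have hr : 0 < r := by positivity
    set O := {w : EuclideanSpace ℝ (Fin n) | r ^ 2 < ‖w - xbar‖ ^ 2} with hOdef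
    have hOopen : IsOpen O := isOpen_Ioi.preimage hcont2
    set γ : EuclideanSpace ℝ (Fin n) → ℝ := fun w => (‖w - xbar‖ ^ 2 - r ^ 2)⁻¹ with hγdef
    have hγ0 : ∀ w ∈ O, 0 ≤ γ w := by
      intro w hw
      have : (0:ℝ) < ‖w - xbar‖ ^ 2 - r ^ 2 := by
        have := hw; simp only [hOdef, Set.mem_setOf_eq] at this; linarith
      positivity
    have hγC : ContDiffOn ℝ 2 γ O := by
      apply ContDiffOn.inv
      · exact (((contDiff_id.sub contDiff_const).norm_sq ℝ).sub contDiff_const).contDiffOn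
      · intro w hw
        have : r ^ 2 < ‖w - xbar‖ ^ 2 := hw
        intro hzero; rw [sub_eq_zero] at hzero; rw [hzero] at this; exact lt_irrefl _ this
    have hesc : ∀ z ∉ O, ∀ c : ℝ, ∀ᶠ w in 𝓝 z, w ∈ O → c ≤ γ w := by
      intro z hz c
      set M := max c 1 with hMdef
      have hM : 0 < M := lt_of_lt_of_le one_pos (le_max_right c 1)
      have hzle : ‖z - xbar‖ ^ 2 ≤ r ^ 2 := by
        simp only [hOdef, Set.mem_setOf_eq, not_lt] at hz; exact hz
      have hev : ∀ᶠ w in 𝓝 z, ‖w - xbar‖ ^ 2 < r ^ 2 + M⁻¹ :=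
        hcont2.continuousAt (x := z) (isOpen_Iio.mem_nhds (by
          simp only [Set.mem_Iio]; nlinarith [inv_pos.2 hM]))
      filter_upwards [hev] with w hw hwO
      have h1 : 0 < ‖w - xbar‖ ^ 2 - r ^ 2 := by
        have := hwO; simp only [hOdef, Set.mem_setOf_eq] at this; linarith
      have h2 : ‖w - xbar‖ ^ 2 - r ^ 2 ≤ M⁻¹ := by linarith
      have h3 : M ≤ γ w := by
        rw [hγdef]
        calc M = (M⁻¹)⁻¹ := (inv_inv M).symm
          _ ≤ (‖w - xbar‖ ^ 2 - r ^ 2)⁻¹ := by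
              apply inv_anti₀ h1 h2
      exact le_trans (le_max_left c 1) h3
    have hGlsc : LowerSemicontinuous (Gaux O γ) :=
      Gaux_lsc hOopen (hγC.continuousOn) hesc
    set h : EuclideanSpace ℝ (Fin n) → EReal := fun w => (0 : EReal) + Gaux O γ w with hhdef
    have hzbot : ∀ z : EuclideanSpace ℝ (Fin n), (fun _ => (0:EReal)) z ≠ ⊥ := by
      intro z; simp
    have hwit : ∃ w : EuclideanSpace ℝ (Fin n), w ∈ O := by
      rcases Nat.eq_zero_or_pos n with hn0 | hnpos
      · exfalso
        obtain ⟨z, hz⟩ := hproper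
        subst hn0
        have hzx : z = xbar := PiLp.ext fun i => Fin.elim0 i
        exact hz (by rw [hzx]; exact hfdeg xbar (Metric.mem_ball_self hδ))
      · set e := EuclideanSpace.single (⟨0, hnpos⟩ : Fin n) (1:ℝ) with hedef
        refine ⟨xbar + (2 * r) • e, ?_⟩
        have hne : ‖xbar + (2 * r) • e - xbar‖ = 2 * r := by
          rw [add_sub_cancel_left, norm_smul, Real.norm_eq_abs, abs_of_pos (by positivity),
            hedef, EuclideanSpace.norm_single, norm_one, mul_one]
        simp only [hOdef, Set.mem_setOf_eq, hne]
        nlinarith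
    refine ⟨h, ?_, ?_, ?_, ?_, ?_, ?_⟩
    · obtain ⟨w, hw⟩ := hwit
      refine ⟨w, ?_⟩
      rw [hhdef]
      simp only [Gaux, if_pos hw, zero_add]
      exact EReal.coe_ne_top _
    · exact lsc_add_Gaux lowerSemicontinuous_const hzbot hGlsc
    · intro z
      rw [hhdef]
      simp only [zero_add]
      exact Gaux_ne_bot O γ z
    · refine ⟨0, fun z => ?_⟩
      rw [hhdef]
      simp only [zero_add, EReal.coe_zero]
      exact Gaux_nonneg hγ0 z
    · intro z hzT
      have hzO : z ∈ O := by
        by_contra hzO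
        apply hzT
        rw [hhdef]
        simp only [Gaux, if_neg hzO]
        rfl
      exact pln_transfer (F := fun _ => (0:EReal)) hzbot hOopen hγC isOpen_univ le_rfl
        zero_pln_ineq hzO (Set.mem_univ z)
    · have hball : Metric.ball xbar r ∈ 𝓝 xbar := Metric.ball_mem_nhds xbar hr
      filter_upwards [hball] with w hw
      have hwO : w ∉ O := by
        simp only [hOdef, Set.mem_setOf_eq, not_lt]
        have h1 : ‖w - xbar‖ < r := by rwa [← mem_ball_iff_norm]
        nlinarith [norm_nonneg (w - xbar)]
      have hfw : f w = ⊤ := hfdeg w (by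
        have : Metric.ball xbar r ⊆ Metric.ball xbar δ :=
          Metric.ball_subset_ball (by rw [hrdef]; linarith)
        exact this hw)
      rw [hhdef]
      simp only [Gaux, if_neg hwO, hfw]
      rfl
  · -- main case
    push_neg at hdeg
    set R := ε / 2 with hRdef
    set r := ε / 4 with hrdef
    have hR : 0 < R := by positivity
    have hr : 0 < r := by positivity
    have hrR : r < R := by rw [hrdef, hRdef]; linarith
    set O := {w : EuclideanSpace ℝ (Fin n) | ‖w - xbar‖ ^ 2 < R ^ 2} with hOdef
    have hOopen : IsOpen O := isOpen_Iio.preimage hcont2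
    have hOU : O ⊆ U := by
      intro w hw
      have h1 : ‖w - xbar‖ ^ 2 < R ^ 2 := hw
      have h2 : ‖w - xbar‖ < R := by nlinarith [norm_nonneg (w - xbar)]
      rw [hUdef, mem_ball_iff_norm]
      linarith
    set k := 2 / (R ^ 2 - r ^ 2) with hkdef
    have hk : 0 < k := by
      rw [hkdef]
      have : 0 < R ^ 2 - r ^ 2 := by nlinarith
      positivity
    set γ : EuclideanSpace ℝ (Fin n) → ℝ := fun w =>
      Real.smoothTransition ((‖w - xbar‖ ^ 2 - r ^ 2) * k) * (R ^ 2 - ‖w - xbar‖ ^ 2)⁻¹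
      with hγdef
    have hγ0 : ∀ w ∈ O, 0 ≤ γ w := by
      intro w hw
      have h1 : (0:ℝ) < R ^ 2 - ‖w - xbar‖ ^ 2 := by
        have := hw; simp only [hOdef, Set.mem_setOf_eq] at this; linarith
      have h2 := Real.smoothTransition.nonneg ((‖w - xbar‖ ^ 2 - r ^ 2) * k)
      positivity
    have hγC : ContDiffOn ℝ 2 γ O := by
      apply ContDiffOn.mul
      · exact (Real.smoothTransition.contDiff.comp
          ((((contDiff_id.sub contDiff_const).norm_sq ℝ).sub contDiff_const).mul
            contDiff_const)).contDiffOn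
      · apply ContDiffOn.inv
        · exact (contDiff_const.sub ((contDiff_id.sub contDiff_const).norm_sq ℝ)).contDiffOn
        · intro w hw
          have : ‖w - xbar‖ ^ 2 < R ^ 2 := hw
          intro hzero; rw [sub_eq_zero] at hzero; rw [← hzero] at this; exact lt_irrefl _ this
    have hesc : ∀ z ∉ O, ∀ c : ℝ, ∀ᶠ w in 𝓝 z, w ∈ O → c ≤ γ w := by
      intro z hz c
      set M := max c 1 with hMdef
      have hM : 0 < M := lt_of_lt_of_le one_pos (le_max_right c 1)
      set η := min M⁻¹ ((R ^ 2 - r ^ 2) / 2) with hηdef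
      have hη : 0 < η := by
        apply lt_min (by positivity)
        nlinarith
      have hzge : R ^ 2 ≤ ‖z - xbar‖ ^ 2 := by
        simp only [hOdef, Set.mem_setOf_eq, not_lt] at hz; exact hz
      have hev : ∀ᶠ w in 𝓝 z, R ^ 2 - η < ‖w - xbar‖ ^ 2 :=
        hcont2.continuousAt (x := z) (isOpen_Ioi.mem_nhds (by
          simp only [Set.mem_Ioi]; linarith))
      filter_upwards [hev] with w hw hwO
      have h1 : ‖w - xbar‖ ^ 2 < R ^ 2 := hwO
      have h2 : 0 < R ^ 2 - ‖w - xbar‖ ^ 2 := by linarith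
      have h3 : R ^ 2 - ‖w - xbar‖ ^ 2 < η := by linarith
      have hτ : Real.smoothTransition ((‖w - xbar‖ ^ 2 - r ^ 2) * k) = 1 := by
        apply Real.smoothTransition.one_of_one_le
        have h4 : η ≤ (R ^ 2 - r ^ 2) / 2 := min_le_right _ _
        have h5 : (R ^ 2 - r ^ 2) / 2 ≤ ‖w - xbar‖ ^ 2 - r ^ 2 := by linarith
        have h6 : 0 < R ^ 2 - r ^ 2 := by nlinarith
        rw [hkdef, ← mul_div_assoc, le_div_iff₀ h6]
        linarith
      have h7 : M ≤ γ w := by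
        rw [hγdef]
        simp only [hτ, one_mul]
        have h8 : R ^ 2 - ‖w - xbar‖ ^ 2 ≤ M⁻¹ := le_of_lt (lt_of_lt_of_le h3 (min_le_left _ _))
        calc M = (M⁻¹)⁻¹ := (inv_inv M).symm
          _ ≤ (R ^ 2 - ‖w - xbar‖ ^ 2)⁻¹ := inv_anti₀ h2 h8
      exact le_trans (le_max_left c 1) h7
    have hGlsc : LowerSemicontinuous (Gaux O γ) :=
      Gaux_lsc hOopen (hγC.continuousOn) hesc
    set h : EuclideanSpace ℝ (Fin n) → EReal := fun w => f w + Gaux O γ w with hhdef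
    have hagree : ∀ w ∈ Metric.ball xbar r, h w = f w := by
      intro w hw
      have h1 : ‖w - xbar‖ < r := by rwa [← mem_ball_iff_norm]
      have h2 : ‖w - xbar‖ ^ 2 < r ^ 2 := by nlinarith [norm_nonneg (w - xbar)]
      have hwO : w ∈ O := by
        simp only [hOdef, Set.mem_setOf_eq]; nlinarith
      have hτ : Real.smoothTransition ((‖w - xbar‖ ^ 2 - r ^ 2) * k) = 0 :=
        Real.smoothTransition.zero_of_nonpos (by nlinarith)
      have hγw : γ w = 0 := by rw [hγdef]; simp only [hτ, zero_mul]
      rw [hhdef]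
      simp only [Gaux, if_pos hwO, hγw, EReal.coe_zero, add_zero]
    refine ⟨h, ?_, ?_, ?_, ?_, ?_, ?_⟩
    · obtain ⟨w, hw, hfw⟩ := hdeg r hr
      exact ⟨w, by rw [hagree w hw]; exact hfw⟩
    · exact lsc_add_Gaux hlsc hbot hGlsc
    · intro z
      rw [hhdef, Ne, EReal.add_eq_bot_iff]
      rintro (h1 | h1)
      · exact hbot z h1
      · exact Gaux_ne_bot O γ z h1
    · obtain ⟨c, hc⟩ := lsc_bddBelow_compact hlsc hbot
        (isCompact_closedBall xbar R)
      refine ⟨c, fun w => ?_⟩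
      by_cases hwO : w ∈ O
      · have h1 : ‖w - xbar‖ ^ 2 < R ^ 2 := hwO
        have h2 : ‖w - xbar‖ ≤ R := by nlinarith [norm_nonneg (w - xbar)]
        have hmem : w ∈ Metric.closedBall xbar R := by
          rw [Metric.mem_closedBall, dist_eq_norm]; exact h2
        have h3 : (c : EReal) ≤ f w := hc w hmem
        have h4 : (0 : EReal) ≤ Gaux O γ w := Gaux_nonneg hγ0 w
        calc (c : EReal) = (c : EReal) + 0 := (add_zero _).symm
          _ ≤ f w + Gaux O γ w := add_le_add h3 h4
      · rw [hhdef]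
        simp only [Gaux, if_neg hwO]
        rw [EReal.add_top_of_ne_bot (hbot w)]
        exact le_top
    · intro z hzT
      have hzO : z ∈ O := by
        by_contra hzO
        apply hzT
        rw [hhdef]
        simp only [Gaux, if_neg hzO]
        exact EReal.add_top_of_ne_bot (hbot z)
      exact pln_transfer hbot hOopen hγC hUopen hβ0 hplnU hzO (hOU hzO)
    · filter_upwards [Metric.ball_mem_nhds xbar hr] with w hw
      exact hagree w hw
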